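/- Let m and n be coprime positive integers, α ∈ ℚ(ω_n), and let tr̄ denote the mean trace (trace divided by field degree). Then tr̄(ω_m·α) = (μ(m)/φ(m))·tr̄(α), where μ is the Möbius function and φ the Euler totient function. -/

import Mathlib

open IntermediateField

/-- The mean trace of an algebraic number: the trace from `ℚ(x)` to `ℚ`
divided by the degree `[ℚ(x):ℚ]`. -/
noncomputable def meanTrace (x : ℂ) : ℚ :=
  Algebra.trace ℚ ℚ⟮x⟯ (IntermediateField.AdjoinSimple.gen ℚ x)
    / (Module.finrank ℚ ℚ⟮x⟯ : ℚ)

open Polynomial Finset Module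

set_option synthInstance.maxHeartbeats 1000000
set_option maxHeartbeats 800000

private lemma sum_nthRoots (N : ℕ) (hN : 0 < N) (ζ : ℂ) (hζ : IsPrimitiveRoot ζ N) :
    ∑ x ∈ nthRootsFinset N (1:ℂ), x = (if N = 1 then (1:ℂ) else 0) := by
  have hnodup := hζ.nthRoots_one_nodup
  have h1 : ∑ x ∈ nthRootsFinset N (1:ℂ), x = (nthRoots N (1:ℂ)).sum := by
    rw [nthRootsFinset, ← Multiset.toFinset_eq hnodup, Finset.sum_mk, Multiset.map_id']
  rw [h1, hζ.nthRoots_eq (one_pow N)]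
  have h2 : ((Multiset.range N).map (ζ ^ · * 1)).sum = ∑ i ∈ Finset.range N, ζ ^ i := by
    simp [Finset.sum]
  rw [h2]
  rcases eq_or_lt_of_le (Nat.one_le_iff_ne_zero.mpr hN.ne') with h | h
  · simp [← h]
  · rw [if_neg (by omega), geom_sum_eq (hζ.ne_one h), hζ.pow_eq_one, sub_self, zero_div]

private lemma sum_primitiveRoots_eq_moebius (k : ℕ) (hk : 0 < k) :
    ∑ x ∈ primitiveRoots k ℂ, x = (ArithmeticFunction.moebius k : ℂ) := by
  have key : ∀ N > 0, ∑ d ∈ N.divisors, (∑ x ∈ primitiveRoots d ℂ, x)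
      = (fun N => if N = 1 then (1:ℂ) else 0) N := by
    intro N hN
    have hζ := Complex.isPrimitiveRoot_exp N hN.ne'
    rw [← Finset.sum_biUnion (fun a _ b _ hab =>
      Finset.disjoint_coe.mp (by exact_mod_cast IsPrimitiveRoot.disjoint hab)),
      ← IsPrimitiveRoot.nthRoots_one_eq_biUnion_primitiveRoots]
    exact sum_nthRoots N hN _ hζ
  have := (ArithmeticFunction.sum_eq_iff_sum_smul_moebius_eq (R := ℂ)
      (f := fun d => ∑ x ∈ primitiveRoots d ℂ, x)
      (g := fun N => if N = 1 then (1:ℂ) else 0)).mp key k hk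
  rw [← this, Finset.sum_eq_single (k, 1)]
  · simp
  · rintro ⟨a, b⟩ hab hne
    simp only [Nat.mem_divisorsAntidiagonal] at hab
    have hb : b ≠ 1 := by
      rintro rfl
      exact hne (by simp [← hab.1])
    simp [hb]
  · intro h
    exact absurd (Nat.mem_divisorsAntidiagonal.mpr ⟨mul_one k, hk.ne'⟩) h

private lemma meanTrace_isPrimitiveRoot {ζ : ℂ} {k : ℕ} (hk : 0 < k) (h : IsPrimitiveRoot ζ k) :
    meanTrace ζ = (ArithmeticFunction.moebius k : ℚ) / (Nat.totient k : ℚ) := by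
  have hint : IsIntegral ℚ ζ := (h.isIntegral hk).tower_top
  have hmin : minpoly ℚ ζ = cyclotomic k ℚ := (cyclotomic_eq_minpoly_rat h hk).symm
  have hdeg : Module.finrank ℚ ℚ⟮ζ⟯ = k.totient := by
    rw [IntermediateField.adjoin.finrank hint, hmin, natDegree_cyclotomic]
  haveI : NeZero (k : ℂ) := ⟨by exact_mod_cast hk.ne'⟩
  have htr : algebraMap ℚ ℂ (Algebra.trace ℚ ℚ⟮ζ⟯ (AdjoinSimple.gen ℚ ζ))
      = (ArithmeticFunction.moebius k : ℂ) := by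
    refine (IntermediateField.AdjoinSimple.trace_gen_eq_sum_roots ζ (IsAlgClosed.splits _)).trans ?_
    rw [hmin, aroots_def, map_cyclotomic, cyclotomic.roots_eq_primitiveRoots_val,
      ← sum_primitiveRoots_eq_moebius k hk]
    rw [Finset.sum_eq_multiset_sum]
    simp
  have htr' : Algebra.trace ℚ ℚ⟮ζ⟯ (AdjoinSimple.gen ℚ ζ)
      = (ArithmeticFunction.moebius k : ℚ) := by
    apply (algebraMap ℚ ℂ).injective
    rw [htr]; simp
  rw [meanTrace, htr', hdeg]

private lemma meanTrace_eq_div (F : IntermediateField ℚ ℂ) [FiniteDimensional ℚ F] {x : ℂ}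
    (hx : x ∈ F) :
    meanTrace x = Algebra.trace ℚ F ⟨x, hx⟩ / (Module.finrank ℚ F : ℚ) := by
  set y : F := ⟨x, hx⟩ with hy
  set E : IntermediateField ℚ F := IntermediateField.adjoin ℚ {y} with hE
  have h1 : Algebra.trace ℚ F y
      = (finrank ↥E ↥F) • Algebra.trace ℚ ↥E (AdjoinSimple.gen ℚ y) :=
    trace_eq_trace_adjoin ℚ y
  have hmap : E.map F.val = ℚ⟮x⟯ := by
    rw [hE]
    exact (IntermediateField.adjoin_map ℚ {y} F.val).trans (by congr 1; simp [hy])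
  let e : ↥E ≃ₐ[ℚ] ↥ℚ⟮x⟯ :=
    (IntermediateField.equivMap E F.val).trans (IntermediateField.equivOfEq hmap)
  have hgen : e (AdjoinSimple.gen ℚ y) = AdjoinSimple.gen ℚ x := by
    apply Subtype.ext
    simp [e, coe_equivMap_apply]
    rfl
  have htr : Algebra.trace ℚ ↥E (AdjoinSimple.gen ℚ y)
      = Algebra.trace ℚ ℚ⟮x⟯ (AdjoinSimple.gen ℚ x) := by
    rw [← hgen, Algebra.trace_eq_of_algEquiv e]
  have hfr : finrank ℚ ↥E = finrank ℚ ℚ⟮x⟯ := e.toLinearEquiv.finrank_eq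
  have hmul : (finrank ℚ F : ℚ) = (finrank ℚ ↥E : ℚ) * (finrank ↥E ↥F : ℚ) := by
    rw [← Nat.cast_mul, Module.finrank_mul_finrank]
  have h2 : (0:ℚ) < finrank ℚ ↥E := by exact_mod_cast Module.finrank_pos
  have h3 : (0:ℚ) < finrank ↥E ↥F := by exact_mod_cast Module.finrank_pos
  rw [meanTrace, h1, ← htr, ← hfr, hmul, nsmul_eq_mul]
  field_simp

theorem meanTrace_omega_m_mul (m n : ℕ) (hm : 0 < m) (hn : 0 < n)
    (hmn : Nat.Coprime m n) (α : ℂ)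
    (hα : α ∈ IntermediateField.adjoin ℚ
      {Complex.exp (2 * Real.pi * Complex.I / n)}) :
    meanTrace (Complex.exp (2 * Real.pi * Complex.I / m) * α)
      = ((ArithmeticFunction.moebius m : ℚ) / (Nat.totient m : ℚ)) * meanTrace α := by
  set ζm := Complex.exp (2 * Real.pi * Complex.I / m) with hζm_def
  set ζn := Complex.exp (2 * Real.pi * Complex.I / n) with hζn_def
  set r : ℚ := (ArithmeticFunction.moebius m : ℚ) / (Nat.totient m : ℚ) with hr
  have hNpos : 0 < m * n := Nat.mul_pos hm hn
  set ζ := Complex.exp (2 * Real.pi * Complex.I / ((m * n : ℕ) : ℂ)) with hζ_def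
  have hζ : IsPrimitiveRoot ζ (m * n) := Complex.isPrimitiveRoot_exp _ hNpos.ne'
  have hmC : (m : ℂ) ≠ 0 := Nat.cast_ne_zero.mpr hm.ne'
  have hnC : (n : ℂ) ≠ 0 := Nat.cast_ne_zero.mpr hn.ne'
  have hζm : ζm = ζ ^ n := by
    rw [hζ_def, hζm_def, ← Complex.exp_nat_mul]
    congr 1
    push_cast
    field_simp
  have hζn : ζn = ζ ^ m := by
    rw [hζ_def, hζn_def, ← Complex.exp_nat_mul]
    congr 1
    push_cast
    field_simp
  have hmprim : IsPrimitiveRoot ζm m := Complex.isPrimitiveRoot_exp m hm.ne'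
  have hnprim : IsPrimitiveRoot ζn n := Complex.isPrimitiveRoot_exp n hn.ne'
  -- the big cyclotomic field
  set K : IntermediateField ℚ ℂ := ℚ⟮ζ⟯ with hK
  have hint : IsIntegral ℚ ζ := (hζ.isIntegral hNpos).tower_top
  haveI : FiniteDimensional ℚ K := IntermediateField.adjoin.finiteDimensional hint
  have hζK : ζ ∈ K := IntermediateField.mem_adjoin_simple_self ℚ ζ
  have hζnK : ζn ∈ K := hζn ▸ pow_mem hζK m
  have hζmK : ζm ∈ K := hζm ▸ pow_mem hζK n
  have hαK : α ∈ K :=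
    (IntermediateField.adjoin_le_iff.mpr (by simpa using hζnK)) hα
  have hprodK : ζm * α ∈ K := mul_mem hζmK hαK
  -- key pointwise identity
  have key : ∀ i : ℕ, meanTrace (ζm * ζn ^ i) = r * meanTrace (ζn ^ i) := by
    intro i
    set d := orderOf (ζn ^ i) with hd
    have hdprim : IsPrimitiveRoot (ζn ^ i) d := IsPrimitiveRoot.orderOf _
    have hpow : (ζn ^ i) ^ n = 1 := by
      rw [← pow_mul, mul_comm, pow_mul, hnprim.pow_eq_one, one_pow]
    have hd_dvd : d ∣ n := orderOf_dvd_of_pow_eq_one hpow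
    have hd_pos : 0 < d :=
      (isOfFinOrder_iff_pow_eq_one.mpr ⟨n, hn, hpow⟩).orderOf_pos
    have hcop : Nat.Coprime m d := Nat.Coprime.coprime_dvd_right hd_dvd hmn
    have horder : orderOf (ζm * ζn ^ i) = m * d := by
      rw [(Commute.all ζm (ζn ^ i)).orderOf_mul_eq_mul_orderOf_of_coprime
        (by rw [← hmprim.eq_orderOf, ← hd]; exact hcop), ← hmprim.eq_orderOf, ← hd]
    have hprodprim : IsPrimitiveRoot (ζm * ζn ^ i) (m * d) := by
      rw [← horder]; exact IsPrimitiveRoot.orderOf _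
    rw [meanTrace_isPrimitiveRoot (Nat.mul_pos hm hd_pos) hprodprim,
      meanTrace_isPrimitiveRoot hd_pos hdprim,
      ArithmeticFunction.isMultiplicative_moebius.map_mul_of_coprime hcop,
      Nat.totient_mul hcop, hr]
    have hφm : (Nat.totient m : ℚ) ≠ 0 := Nat.cast_ne_zero.mpr (Nat.totient_pos.mpr hm).ne'
    have hφd : (Nat.totient d : ℚ) ≠ 0 := Nat.cast_ne_zero.mpr (Nat.totient_pos.mpr hd_pos).ne'
    push_cast
    field_simp
  -- representation of α as rational combination of powers of ζn
  have hintn : IsIntegral ℚ ζn := (hnprim.isIntegral hn).tower_top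
  obtain ⟨s, c, hrep⟩ : ∃ (s : ℕ) (c : Fin s → ℚ), α = ∑ i, (c i : ℂ) * ζn ^ (i : ℕ) := by
    let pb := IntermediateField.adjoin.powerBasis hintn
    set y : ℚ⟮ζn⟯ := ⟨α, hα⟩ with hy
    refine ⟨pb.dim, fun i => pb.basis.repr y i, ?_⟩
    have hsum := pb.basis.sum_repr y
    have h := congrArg (algebraMap ℚ⟮ζn⟯ ℂ) hsum
    rw [map_sum] at h
    have : α = ∑ i, algebraMap ℚ⟮ζn⟯ ℂ ((pb.basis.repr y i) • pb.basis i) := h.symm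
    rw [this]
    refine Finset.sum_congr rfl fun i _ => ?_
    rw [Algebra.smul_def, map_mul, PowerBasis.coe_basis, map_pow,
      IntermediateField.adjoin.powerBasis_gen, IntermediateField.AdjoinSimple.algebraMap_gen]
    congr 1
  -- elements of K
  set zm : K := ⟨ζm, hζmK⟩ with hzm
  set zn : K := ⟨ζn, hζnK⟩ with hzn
  set a : K := ⟨α, hαK⟩ with ha
  have hzn_pow : ∀ i : ℕ, ((zn ^ i : K) : ℂ) = ζn ^ i := fun i => by
    rw [hzn]; exact SubmonoidClass.coe_pow _ i
  have ha_rep : a = ∑ i, c i • zn ^ (i : ℕ) := by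
    apply Subtype.ext
    rw [ha]
    push_cast [hzn_pow]
    rw [hrep]
    refine Finset.sum_congr rfl fun i _ => ?_
    rw [Rat.smul_def]
  have hD : (finrank ℚ K : ℚ) ≠ 0 :=
    Nat.cast_ne_zero.mpr Module.finrank_pos.ne'
  have tr_term : ∀ i : ℕ, Algebra.trace ℚ K (zm * zn ^ i)
      = r * Algebra.trace ℚ K (zn ^ i) := by
    intro i
    have hmem1 : ζm * ζn ^ i ∈ K := mul_mem hζmK (pow_mem hζnK i)
    have hmem2 : ζn ^ i ∈ K := pow_mem hζnK i
    have h1 := meanTrace_eq_div K hmem1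
    have h2 := meanTrace_eq_div K hmem2
    have e1 : (⟨ζm * ζn ^ i, hmem1⟩ : K) = zm * zn ^ i := by
      apply Subtype.ext
      push_cast [hzn_pow]
      rfl
    have e2 : (⟨ζn ^ i, hmem2⟩ : K) = zn ^ i := by
      apply Subtype.ext
      push_cast [hzn_pow]
      rfl
    rw [e1] at h1
    rw [e2] at h2
    have h3 := key i
    rw [h1, h2] at h3
    field_simp at h3
    exact h3
  have final : Algebra.trace ℚ K (zm * a) = r * Algebra.trace ℚ K a := by
    rw [ha_rep, Finset.mul_sum]
    have : ∀ i : Fin s, zm * c i • zn ^ (i : ℕ) = c i • (zm * zn ^ (i : ℕ)) := fun i =>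
      (mul_smul_comm _ _ _)
    simp_rw [this, map_sum, map_smul, tr_term, smul_eq_mul, Finset.mul_sum]
    refine Finset.sum_congr rfl fun i _ => by ring
  have hma : (⟨ζm * α, hprodK⟩ : K) = zm * a := by
    apply Subtype.ext
    rfl
  rw [meanTrace_eq_div K hprodK, meanTrace_eq_div K hαK, hma, ← ha, final]
  ring
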